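/- Let d ≥ 2 and let V be a finite-dimensional ℂ-subspace of the space of functions from ℝ^d to ℂ that is translation invariant (for every h ∈ ℝ^d and g ∈ V, the function x ↦ g(x + h) lies in V) and invariant under orthogonal transformations (for every linear isometry equivalence P of ℝ^d and g ∈ V, the function x ↦ g(P x) lies in V). Then there exists a polynomial q ∈ ℂ[z] with q(0) ≠ 0 such that for every z ∈ ℝ^d with ‖z‖ ≤ 2, every g ∈ V, and every x ∈ ℝ^d, one has ∑_{k=0}^{deg q} (coefficient of z^k in q) · g(x + k·z) = 0. -/

import Mathlib

set_option synthInstance.maxHeartbeats 1000000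
set_option maxHeartbeats 1000000

open Real Polynomial Module

namespace AnnInv


variable {d : ℕ}

/-- Rotation by angle θ in the (0,1)-coordinate plane. -/
noncomputable def rotFun (hd : 2 ≤ d) (θ : ℝ) (x : EuclideanSpace ℝ (Fin d)) :
    EuclideanSpace ℝ (Fin d) :=
  WithLp.toLp 2 fun i : Fin d => if (i : ℕ) = 0 then
      Real.cos θ * x ⟨0, by omega⟩ - Real.sin θ * x ⟨1, by omega⟩
    else if (i : ℕ) = 1 then
      Real.sin θ * x ⟨0, by omega⟩ + Real.cos θ * x ⟨1, by omega⟩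
    else x i

lemma rotFun_comp (hd : 2 ≤ d) (a b : ℝ) (x : EuclideanSpace ℝ (Fin d)) :
    rotFun hd a (rotFun hd b x) = rotFun hd (a + b) x := by
  ext i
  by_cases h0 : (i : ℕ) = 0
  · simp [rotFun, h0, Real.cos_add, Real.sin_add]; ring
  · by_cases h1 : (i : ℕ) = 1
    · simp [rotFun, h0, h1, Real.cos_add, Real.sin_add]; ring
    · simp [rotFun, h0, h1]

lemma rotFun_zero (hd : 2 ≤ d) (x : EuclideanSpace ℝ (Fin d)) : rotFun hd 0 x = x := by
  ext i
  by_cases h0 : (i : ℕ) = 0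
  · simp [rotFun, h0]
    exact (congrArg x (Fin.ext h0.symm))
  · by_cases h1 : (i : ℕ) = 1
    · simp [rotFun, h0, h1]
      exact (congrArg x (Fin.ext h1.symm))
    · simp [rotFun, h0, h1]

lemma rotFun_norm (hd : 2 ≤ d) (θ : ℝ) (x : EuclideanSpace ℝ (Fin d)) :
    ‖rotFun hd θ x‖ = ‖x‖ := by
  have h01 : (⟨0, by omega⟩ : Fin d) ≠ (⟨1, by omega⟩ : Fin d) := by simp [Fin.ext_iff]
  have split : ∀ f : Fin d → ℝ, ∑ i, f i
      = f ⟨0, by omega⟩ + (f ⟨1, by omega⟩ +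
        ∑ i ∈ (Finset.univ.erase (⟨0, by omega⟩ : Fin d)).erase (⟨1, by omega⟩ : Fin d), f i) := by
    intro f
    rw [Finset.add_sum_erase _ f (Finset.mem_erase.2 ⟨h01.symm, Finset.mem_univ _⟩),
      Finset.add_sum_erase _ f (Finset.mem_univ _)]
  rw [EuclideanSpace.norm_eq, EuclideanSpace.norm_eq]
  congr 1
  rw [split (fun i => ‖rotFun hd θ x i‖ ^ 2), split (fun i => ‖x i‖ ^ 2)]
  have tail : ∀ i ∈ (Finset.univ.erase (⟨0, by omega⟩ : Fin d)).erase (⟨1, by omega⟩ : Fin d),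
      ‖rotFun hd θ x i‖ ^ 2 = ‖x i‖ ^ 2 := by
    intro i hi
    rw [Finset.mem_erase, Finset.mem_erase] at hi
    have n1 : (i : ℕ) ≠ 1 := fun h => hi.1 (Fin.ext h)
    have n0 : (i : ℕ) ≠ 0 := fun h => hi.2.1 (Fin.ext h)
    simp only [rotFun, PiLp.toLp_apply, if_neg n0, if_neg n1]
  rw [Finset.sum_congr rfl tail]
  have e0 : rotFun hd θ x ⟨0, by omega⟩
      = Real.cos θ * x ⟨0, by omega⟩ - Real.sin θ * x ⟨1, by omega⟩ := by simp [rotFun]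
  have e1 : rotFun hd θ x ⟨1, by omega⟩
      = Real.sin θ * x ⟨0, by omega⟩ + Real.cos θ * x ⟨1, by omega⟩ := by simp [rotFun]
  rw [e0, e1]
  simp only [Real.norm_eq_abs, sq_abs]
  nlinarith [Real.sin_sq_add_cos_sq θ]

noncomputable def rotL (hd : 2 ≤ d) (θ : ℝ) :
    EuclideanSpace ℝ (Fin d) →ₗ[ℝ] EuclideanSpace ℝ (Fin d) where
  toFun := rotFun hd θ
  map_add' x y := by
    ext i
    by_cases h0 : (i : ℕ) = 0
    · simp [rotFun, h0]; ring
    · by_cases h1 : (i : ℕ) = 1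
      · simp [rotFun, h0, h1]; ring
      · simp [rotFun, h0, h1]
  map_smul' c x := by
    ext i
    by_cases h0 : (i : ℕ) = 0
    · simp [rotFun, h0]; ring
    · by_cases h1 : (i : ℕ) = 1
      · simp [rotFun, h0, h1]; ring
      · simp [rotFun, h0, h1]

/-- Rotation as a linear isometry equivalence. -/
noncomputable def rot (hd : 2 ≤ d) (θ : ℝ) :
    EuclideanSpace ℝ (Fin d) ≃ₗᵢ[ℝ] EuclideanSpace ℝ (Fin d) :=
  { rotL hd θ with
    invFun := rotFun hd (-θ)
    left_inv := fun x => by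
      show rotFun hd (-θ) (rotFun hd θ x) = x
      rw [rotFun_comp, neg_add_cancel, rotFun_zero]
    right_inv := fun x => by
      show rotFun hd θ (rotFun hd (-θ) x) = x
      rw [rotFun_comp, add_neg_cancel, rotFun_zero]
    norm_map' := rotFun_norm hd θ }

lemma rot_apply (hd : 2 ≤ d) (θ : ℝ) (x : EuclideanSpace ℝ (Fin d)) :
    rot hd θ x = rotFun hd θ x := rfl

lemma rot_pi_single (hd : 2 ≤ d) (r : ℝ) :
    rot hd Real.pi (EuclideanSpace.single (⟨0, by omega⟩ : Fin d) r)
      = -(EuclideanSpace.single (⟨0, by omega⟩ : Fin d) r) := by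
  ext i
  simp only [rot_apply, rotFun, PiLp.toLp_apply, Real.cos_pi, Real.sin_pi, PiLp.neg_apply,
    EuclideanSpace.single_apply]
  by_cases h0 : (i : ℕ) = 0
  · have : i = ⟨0, by omega⟩ := Fin.ext h0
    simp [h0, this, Fin.ext_iff]
  · by_cases h1 : (i : ℕ) = 1
    · have : i = ⟨1, by omega⟩ := Fin.ext h1
      simp [h0, h1, this, Fin.ext_iff]
    · have n0 : i ≠ ⟨0, by omega⟩ := fun h => h0 (by rw [h])
      simp [h0, h1, n0]



variable {V : Submodule ℂ (EuclideanSpace ℝ (Fin d) → ℂ)}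

/-- Translation operator on `V`. -/
noncomputable def T
    (htrans : ∀ (h : EuclideanSpace ℝ (Fin d)) (g : EuclideanSpace ℝ (Fin d) → ℂ),
      g ∈ V → (fun x => g (x + h)) ∈ V) (z : EuclideanSpace ℝ (Fin d)) :
    Module.End ℂ V where
  toFun g := ⟨fun x => g.1 (x + z), htrans z g.1 g.2⟩
  map_add' g₁ g₂ := by ext x; simp
  map_smul' c g := by ext x; simp

variable (htrans : ∀ (h : EuclideanSpace ℝ (Fin d)) (g : EuclideanSpace ℝ (Fin d) → ℂ),
      g ∈ V → (fun x => g (x + h)) ∈ V)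

lemma T_apply (z : EuclideanSpace ℝ (Fin d)) (g : V) (x : EuclideanSpace ℝ (Fin d)) :
    (T htrans z g).1 x = g.1 (x + z) := rfl

lemma T_comm (z w : EuclideanSpace ℝ (Fin d)) (g : V) :
    T htrans z (T htrans w g) = T htrans w (T htrans z g) := by
  ext x
  simp only [T_apply]
  rw [add_assoc, add_assoc, add_comm z w]

lemma T_pow_apply (z : EuclideanSpace ℝ (Fin d)) (k : ℕ) (g : V) (x : EuclideanSpace ℝ (Fin d)) :
    ((T htrans z ^ k) g).1 x = g.1 (x + k • z) := by
  induction k generalizing g x with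
  | zero => simp
  | succ k ih =>
    rw [pow_succ, Module.End.mul_apply, ih, T_apply, succ_nsmul, ← add_assoc]



variable {V : Submodule ℂ (EuclideanSpace ℝ (Fin d) → ℂ)}

/-- The set of multiplicative characters lying in `V`. -/
def CharSet (V : Submodule ℂ (EuclideanSpace ℝ (Fin d) → ℂ)) :
    Set (EuclideanSpace ℝ (Fin d) → ℂ) :=
  {f | f ∈ V ∧ f 0 = 1 ∧ ∀ x y, f (x + y) = f x * f y}

lemma charSet_finite [FiniteDimensional ℂ V] : (CharSet V).Finite := by
  rw [← Set.finite_coe_iff]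
  let toHom : CharSet V → (Multiplicative (EuclideanSpace ℝ (Fin d)) →* ℂ) := fun f =>
    { toFun := fun a => f.1 a.toAdd
      map_one' := f.2.2.1
      map_mul' := fun a b => f.2.2.2 a.toAdd b.toAdd }
  have hinj : Function.Injective toHom := by
    intro f g hfg
    apply Subtype.ext
    funext x
    exact DFunLike.congr_fun hfg (Multiplicative.ofAdd x)
  have h2 : LinearIndependent ℂ (fun f : CharSet V => (f.1 : EuclideanSpace ℝ (Fin d) → ℂ)) :=
    (linearIndependent_monoidHom (Multiplicative (EuclideanSpace ℝ (Fin d))) ℂ).comp toHom hinj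
  have hind : LinearIndependent ℂ (fun f : CharSet V => (⟨f.1, f.2.1⟩ : V)) :=
    h2.of_comp V.subtype
  exact hind.finite

lemma charSet_comp_isometry
    (horth : ∀ (P : EuclideanSpace ℝ (Fin d) ≃ₗᵢ[ℝ] EuclideanSpace ℝ (Fin d))
      (g : EuclideanSpace ℝ (Fin d) → ℂ), g ∈ V → (fun x => g (P x)) ∈ V)
    {f : EuclideanSpace ℝ (Fin d) → ℂ} (hf : f ∈ CharSet V)
    (P : EuclideanSpace ℝ (Fin d) ≃ₗᵢ[ℝ] EuclideanSpace ℝ (Fin d)) :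
    (fun x => f (P x)) ∈ CharSet V := by
  refine ⟨horth P f hf.1, ?_, fun x y => ?_⟩
  · show f (P 0) = 1
    rw [map_zero]; exact hf.2.1
  · show f (P (x + y)) = f (P x) * f (P y)
    rw [map_add]; exact hf.2.2 (P x) (P y)


lemma rot_rot (hd : 2 ≤ d) (a b : ℝ) (x : EuclideanSpace ℝ (Fin d)) :
    rot hd a (rot hd b x) = rot hd (a + b) x := rotFun_comp hd a b x

lemma rot_zero' (hd : 2 ≤ d) (x : EuclideanSpace ℝ (Fin d)) : rot hd 0 x = x :=
  rotFun_zero hd x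

lemma charSet_rot_pi [FiniteDimensional ℂ V] (hd : 2 ≤ d)
    (horth : ∀ (P : EuclideanSpace ℝ (Fin d) ≃ₗᵢ[ℝ] EuclideanSpace ℝ (Fin d))
      (g : EuclideanSpace ℝ (Fin d) → ℂ), g ∈ V → (fun x => g (P x)) ∈ V)
    {f : EuclideanSpace ℝ (Fin d) → ℂ} (hf : f ∈ CharSet V) :
    ∀ x, f (rot hd Real.pi x) = f x := by
  classical
  have hfin : (CharSet V).Finite := charSet_finite
  set S := hfin.toFinset with hS
  set m := S.card with hm
  set t : ℝ := Real.pi / (Nat.factorial m) with ht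
  set F : ℕ → (EuclideanSpace ℝ (Fin d) → ℂ) := fun k => fun x => f (rot hd (k * t) x) with hF
  have hmem : ∀ k : ℕ, F k ∈ S := fun k =>
    hfin.mem_toFinset.2 (charSet_comp_isometry horth hf (rot hd (k * t)))
  have key : ∀ i j : ℕ, i < j → j ≤ m → F i = F j → ∀ x, f (rot hd Real.pi x) = f x := by
    intro i j hij hjm heq x
    set a := j - i with ha
    have ha1 : 1 ≤ a := by omega
    have ham : a ≤ m := by omega
    have hacast : (a : ℝ) = (j : ℝ) - (i : ℝ) := by
      rw [ha, Nat.cast_sub hij.le]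
    have shift : ∀ (s : ℝ) (y : EuclideanSpace ℝ (Fin d)),
        f (rot hd (s + a * t) y) = f (rot hd s y) := by
      intro s y
      have e1 : (i : ℝ) * t + (s - i * t) = s := by ring
      have e2 : (j : ℝ) * t + (s - i * t) = s + a * t := by rw [hacast]; ring
      have h1 : rot hd s y = rot hd ((i : ℝ) * t) (rot hd (s - i * t) y) := by
        rw [rot_rot, e1]
      have h2 : rot hd (s + a * t) y = rot hd ((j : ℝ) * t) (rot hd (s - i * t) y) := by
        rw [rot_rot, e2]
      rw [h1, h2]
      exact (congrFun heq (rot hd (s - i * t) y)).symm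
    have iter : ∀ (N : ℕ) (y : EuclideanSpace ℝ (Fin d)),
        f (rot hd (N * (a * t)) y) = f y := by
      intro N
      induction N with
      | zero =>
        intro y
        have : ((0 : ℕ) : ℝ) * (a * t) = 0 := by simp
        rw [this, rot_zero']
      | succ N ihN =>
        intro y
        have : ((N + 1 : ℕ) : ℝ) * (a * t) = (N : ℝ) * (a * t) + a * t := by push_cast; ring
        rw [this, shift, ihN]
    have hdvd : a ∣ Nat.factorial m := Nat.dvd_factorial ha1 ham
    have hNa : (Nat.factorial m / a) * a = Nat.factorial m := Nat.div_mul_cancel hdvd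
    have hfac : (Nat.factorial m : ℝ) ≠ 0 := Nat.cast_ne_zero.2 (Nat.factorial_ne_zero m)
    have hangle : ((Nat.factorial m / a : ℕ) : ℝ) * ((a : ℝ) * t) = Real.pi := by
      rw [← mul_assoc, ← Nat.cast_mul, hNa, ht]
      field_simp
    rw [← hangle]
    exact iter (Nat.factorial m / a) x
  obtain ⟨i, hi, j, hj, hij, hfij⟩ :=
    Finset.exists_ne_map_eq_of_card_lt_of_maps_to
      (s := Finset.range (m + 1)) (t := S) (by simp; omega) (fun k _ => hmem k)
  rw [Finset.mem_range] at hi hj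
  rcases Nat.lt_or_ge i j with hlt | hge
  · exact key i j hlt (by omega) hfij
  · have hlt : j < i := by omega
    exact key j i hlt (by omega) hfij.symm

lemma charSet_eval_one [FiniteDimensional ℂ V] (hd : 2 ≤ d)
    (horth : ∀ (P : EuclideanSpace ℝ (Fin d) ≃ₗᵢ[ℝ] EuclideanSpace ℝ (Fin d))
      (g : EuclideanSpace ℝ (Fin d) → ℂ), g ∈ V → (fun x => g (P x)) ∈ V)
    {f : EuclideanSpace ℝ (Fin d) → ℂ} (hf : f ∈ CharSet V)
    (z : EuclideanSpace ℝ (Fin d)) : f z = 1 := by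
  have hsq : ∀ w : EuclideanSpace ℝ (Fin d), f w * f w = 1 := by
    intro w
    have hneg : f (-w) = f w := by
      set b : EuclideanSpace ℝ (Fin d) := EuclideanSpace.single (⟨0, by omega⟩ : Fin d) ‖w‖
        with hbdef
      have hb : ‖b‖ = ‖w‖ := by
        rw [hbdef, EuclideanSpace.norm_single, Real.norm_eq_abs]
        exact abs_of_nonneg (norm_nonneg w)
      set Q := Submodule.reflection (ℝ ∙ (b - w))ᗮ with hQdef
      have hQ : Q b = w := Submodule.reflection_sub hb
      have hfQ : (fun x => f (Q x)) ∈ CharSet V := charSet_comp_isometry horth hf Q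
      have hpi := charSet_rot_pi hd horth hfQ b
      rw [rot_pi_single] at hpi
      rw [map_neg, hQ] at hpi
      exact hpi
    have h1 := hf.2.2 w (-w)
    rw [add_neg_cancel, hf.2.1] at h1
    calc f w * f w = f w * f (-w) := by rw [hneg]
      _ = 1 := h1.symm
  have hz : z = (2⁻¹ : ℝ) • z + (2⁻¹ : ℝ) • z := by
    rw [← add_smul]; norm_num
  have h2 : f z = f ((2⁻¹ : ℝ) • z) * f ((2⁻¹ : ℝ) • z) := by
    conv_lhs => rw [hz]
    exact hf.2.2 _ _
  rw [h2, hsq]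


lemma exists_char_of_eigenvalue [FiniteDimensional ℂ V]
    (htrans : ∀ (h : EuclideanSpace ℝ (Fin d)) (g : EuclideanSpace ℝ (Fin d) → ℂ),
      g ∈ V → (fun x => g (x + h)) ∈ V)
    (z : EuclideanSpace ℝ (Fin d)) (μ : ℂ)
    (hev : Module.End.HasEigenvalue (T htrans z) μ) :
    ∃ f ∈ CharSet V, f z = μ := by
  classical
  set E0 := Module.End.eigenspace (T htrans z) μ with hE0
  have hE0ne : E0 ≠ ⊥ := hev
  set P : Set (Submodule ℂ V) :=
    {W | W ≠ ⊥ ∧ W ≤ E0 ∧ ∀ h : EuclideanSpace ℝ (Fin d), ∀ w ∈ W, T htrans h w ∈ W} with hP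
  have hE0P : E0 ∈ P := by
    refine ⟨hE0ne, le_rfl, fun h w hw => ?_⟩
    rw [hE0, Module.End.mem_eigenspace_iff] at hw ⊢
    rw [T_comm htrans z h, hw, map_smul]
  set ranks : Set ℕ := (fun W : Submodule ℂ V => Module.finrank ℂ W) '' P with hranks
  have hrne : ranks.Nonempty := ⟨_, E0, hE0P, rfl⟩
  obtain ⟨W, hWP, hWrank⟩ := Nat.sInf_mem hrne
  have hscal : ∀ h : EuclideanSpace ℝ (Fin d), ∃ c : ℂ, ∀ w ∈ W, T htrans h w = c • w := by
    intro h
    haveI : Nontrivial (↥W) := Submodule.nontrivial_iff_ne_bot.mpr hWP.1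
    set φ : Module.End ℂ W := LinearMap.restrict (T htrans h) (hWP.2.2 h) with hφ
    obtain ⟨c, hc⟩ := Module.End.exists_eigenvalue (K := ℂ) (V := ↥W) φ
    obtain ⟨v, hv⟩ := hc.exists_hasEigenvector
    refine ⟨c, ?_⟩
    set W' : Submodule ℂ V := W ⊓ Module.End.eigenspace (T htrans h) c with hW'
    have hvW' : (v : V) ∈ W' := by
      refine Submodule.mem_inf.2 ⟨v.2, Module.End.mem_eigenspace_iff.2 ?_⟩
      have := congrArg (Subtype.val) (Module.End.HasEigenvector.apply_eq_smul hv)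
      exact this
    have hW'P : W' ∈ P := by
      refine ⟨?_, le_trans inf_le_left hWP.2.1, fun h' w hw => ?_⟩
      · rw [Submodule.ne_bot_iff]
        refine ⟨(v : V), hvW', fun hv0 => hv.2 ?_⟩
        exact Subtype.ext hv0
      · obtain ⟨hw1, hw2⟩ := Submodule.mem_inf.1 hw
        have hw2' := Module.End.mem_eigenspace_iff.1 hw2
        refine Submodule.mem_inf.2 ⟨hWP.2.2 h' w hw1, Module.End.mem_eigenspace_iff.2 ?_⟩
        rw [T_comm htrans h h', hw2', map_smul]
    have hWr : Module.finrank ℂ W = sInf ranks := hWrank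
    have hle : Module.finrank ℂ W ≤ Module.finrank ℂ W' := by
      rw [hWr]
      exact Nat.sInf_le ⟨W', hW'P, rfl⟩
    have hWeq : W' = W := Submodule.eq_of_le_of_finrank_le inf_le_left hle
    intro w hw
    have hwW' : w ∈ W' := hWeq ▸ hw
    exact Module.End.mem_eigenspace_iff.1 (Submodule.mem_inf.1 hwW').2
  obtain ⟨g, hgW, hg0⟩ := Submodule.exists_mem_ne_zero_of_ne_bot hWP.1
  set f : EuclideanSpace ℝ (Fin d) → ℂ := (g : EuclideanSpace ℝ (Fin d) → ℂ) with hfdef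
  have hfV : f ∈ V := g.2
  have hprop : ∀ h : EuclideanSpace ℝ (Fin d), ∃ c : ℂ, ∀ x, f (x + h) = c * f x := by
    intro h
    obtain ⟨c, hc⟩ := hscal h
    refine ⟨c, fun x => ?_⟩
    have := congrFun (congrArg Subtype.val (hc g hgW)) x
    exact this
  have hfne : f ≠ 0 := fun hf0 => hg0 (Subtype.ext hf0)
  have hf0 : f 0 ≠ 0 := by
    obtain ⟨x₀, hx₀⟩ := Function.ne_iff.1 hfne
    obtain ⟨c, hc⟩ := hprop x₀
    intro h0
    apply hx₀
    have := hc 0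
    rw [zero_add, h0, mul_zero] at this
    simpa using this
  have hmul : ∀ x y, f (x + y) * f 0 = f x * f y := by
    intro x y
    obtain ⟨c, hc⟩ := hprop y
    have h1 := hc x
    have h2 := hc 0
    rw [zero_add] at h2
    rw [h1, h2]; ring
  refine ⟨fun x => (f 0)⁻¹ * f x, ⟨?_, ?_, ?_⟩, ?_⟩
  · have := V.smul_mem ((f 0)⁻¹) hfV
    convert this using 1
    rfl
  · exact inv_mul_cancel₀ hf0
  · intro x y
    have hx := hmul x y
    field_simp
    linear_combination hx
  · show (f 0)⁻¹ * f z = μ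
    have hgE : g ∈ E0 := hWP.2.1 hgW
    have hgE' : T htrans z g = μ • g := Module.End.mem_eigenspace_iff.1 hgE
    have hz := congrFun (congrArg Subtype.val hgE') 0
    rw [T_apply, zero_add] at hz
    have hz' : f z = μ * f 0 := hz.trans rfl
    rw [hz']
    field_simp

lemma T_sub_one_pow_eq_zero [FiniteDimensional ℂ V] (hd : 2 ≤ d)
    (htrans : ∀ (h : EuclideanSpace ℝ (Fin d)) (g : EuclideanSpace ℝ (Fin d) → ℂ),
      g ∈ V → (fun x => g (x + h)) ∈ V)
    (horth : ∀ (P : EuclideanSpace ℝ (Fin d) ≃ₗᵢ[ℝ] EuclideanSpace ℝ (Fin d))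
      (g : EuclideanSpace ℝ (Fin d) → ℂ), g ∈ V → (fun x => g (P x)) ∈ V)
    (z : EuclideanSpace ℝ (Fin d)) :
    (T htrans z - 1) ^ (Module.finrank ℂ V) = 0 := by
  have hev1 : ∀ μ : ℂ, Module.End.HasEigenvalue (T htrans z) μ → μ = 1 := by
    intro μ hev
    obtain ⟨f, hf, hfz⟩ := exists_char_of_eigenvalue htrans z μ hev
    rw [← hfz]
    exact charSet_eval_one hd horth hf z
  set p := minpoly ℂ (T htrans z) with hp
  have hInt : IsIntegral ℂ (T htrans z) := LinearMap.isIntegral _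
  have hmon : p.Monic := minpoly.monic hInt
  have hsplit : p.Splits := IsAlgClosed.splits p
  have hroots : ∀ μ ∈ p.roots, μ = 1 := by
    intro μ hμ
    exact hev1 μ (Module.End.hasEigenvalue_iff_isRoot.2 (Polynomial.isRoot_of_mem_roots hμ))
  have hpeq : p = (X - Polynomial.C 1) ^ (Multiset.card p.roots) := by
    have h1 := hsplit.eq_prod_roots_of_monic hmon
    have h2 : Multiset.map (fun a => X - C a) p.roots
        = Multiset.map (fun _ => X - (C 1 : Polynomial ℂ)) p.roots :=
      Multiset.map_congr rfl (fun μ hμ => by rw [hroots μ hμ])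
    rw [h2, Multiset.map_const', Multiset.prod_replicate] at h1
    exact h1
  have hnil : IsNilpotent (T htrans z - 1) := by
    refine ⟨Multiset.card p.roots, ?_⟩
    have haev := minpoly.aeval ℂ (T htrans z)
    rw [← hp, hpeq, map_pow, map_sub, aeval_X, aeval_C, map_one] at haev
    exact haev
  have hchar := hnil.charpoly_eq_X_pow_finrank
  have hfin := LinearMap.aeval_self_charpoly (T htrans z - 1)
  rw [hchar, map_pow, aeval_X] at hfin
  exact hfin

end AnnInv

open Polynomial in
/-- For a finite-dimensional, translation- and orthogonally-invariant subspace `V` of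
functions `ℝ^d → ℂ` (`d ≥ 2`), there is a single polynomial `q` with `q(0) ≠ 0` such
that `q(τ_z) g = 0` for every `g ∈ V` and every `z` with `‖z‖ ≤ 2`. -/
theorem exists_annihilating_polynomial_of_invariant_subspace
    (d : ℕ) (hd : 2 ≤ d)
    (V : Submodule ℂ (EuclideanSpace ℝ (Fin d) → ℂ)) [FiniteDimensional ℂ V]
    (htrans : ∀ (h : EuclideanSpace ℝ (Fin d)) (g : EuclideanSpace ℝ (Fin d) → ℂ),
      g ∈ V → (fun x => g (x + h)) ∈ V)
    (horth : ∀ (P : EuclideanSpace ℝ (Fin d) ≃ₗᵢ[ℝ] EuclideanSpace ℝ (Fin d))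
      (g : EuclideanSpace ℝ (Fin d) → ℂ), g ∈ V → (fun x => g (P x)) ∈ V) :
    ∃ q : Polynomial ℂ, q.eval 0 ≠ 0 ∧
      ∀ z : EuclideanSpace ℝ (Fin d), ‖z‖ ≤ 2 →
        ∀ g ∈ V, ∀ x : EuclideanSpace ℝ (Fin d),
          ∑ k ∈ Finset.range (q.natDegree + 1), q.coeff k * g (x + k • z) = 0 := by
  classical
  set n := Module.finrank ℂ V with hn
  set q : Polynomial ℂ := (X - 1) ^ n with hq
  refine ⟨q, ?_, ?_⟩
  · rw [hq, eval_pow, eval_sub, eval_X, eval_one]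
    exact pow_ne_zero _ (by norm_num)
  · intro z hz g hg x
    have hT := AnnInv.T_sub_one_pow_eq_zero hd htrans horth z
    have haev : Polynomial.aeval (AnnInv.T htrans z) q = 0 := by
      rw [hq, map_pow, map_sub, aeval_X, map_one]
      exact hT
    have hsum := Polynomial.aeval_eq_sum_range (x := AnnInv.T htrans z) (p := q)
    rw [haev] at hsum
    have h0 : ((∑ i ∈ Finset.range (q.natDegree + 1),
        q.coeff i • (AnnInv.T htrans z) ^ i) (⟨g, hg⟩ : V) : EuclideanSpace ℝ (Fin d) → ℂ) x
        = 0 := by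
      rw [← hsum]
      rfl
    rw [← h0]
    rw [LinearMap.sum_apply]
    rw [Submodule.coe_sum, Finset.sum_apply]
    apply Finset.sum_congr rfl
    intro k _
    simp only [LinearMap.smul_apply, Submodule.coe_smul, Pi.smul_apply, smul_eq_mul]
    rw [AnnInv.T_pow_apply htrans z k ⟨g, hg⟩ x]
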